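/- Let 1 < α < 2 and ε > 0. There exist constants c ∈ (0,1) and C > 0, depending only on α and ε, such that for every real N ≥ 1, all integers k₂ ≠ k₃ with |k₂| ≤ cN and |k₃| ≤ cN, and every μ ∈ ℝ: #{k₁ ∈ ℤ : N/2 < |k₁| ≤ N and |Φ_{k₁,k₂,k₃} − μ| ≤ N^ε} ≤ C N^ε (1 + N^{2−α}/(1 + |k₂ − k₃|)). In particular the bound is uniform in μ. -/

import Mathlib

/-- The resonance function `Φ_{k₁,k₂,k₃} = |k₁|^α − |k₂|^α + |k₃|^α − |k₁−k₂+k₃|^α`. -/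
noncomputable def resPhi (α : ℝ) (k₁ k₂ k₃ : ℤ) : ℝ :=
  |(k₁ : ℝ)| ^ α - |(k₂ : ℝ)| ^ α + |(k₃ : ℝ)| ^ α - |((k₁ - k₂ + k₃ : ℤ) : ℝ)| ^ α


section CountingHelpers

open Real Set

lemma tangentAux (α : ℝ) (hα₁ : 1 < α) (hα₂ : α < 2) {x y : ℝ} (hy : 0 < y) (hxy : y ≤ x) :
    (α - 1) * x ^ (α - 2) * (x - y) ≤ x ^ (α - 1) - y ^ (α - 1) := by
  rcases eq_or_lt_of_le hxy with rfl | hlt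
  · simp
  have hx : 0 < x := hy.trans hlt
  obtain ⟨ξ, hξ, hEq⟩ := exists_hasDerivAt_eq_slope (fun s => s ^ (α - 1))
      (fun s => (α - 1) * s ^ (α - 2)) hlt
      (fun s hs => (Real.continuousAt_rpow_const s (α - 1)
        (Or.inl (ne_of_gt (lt_of_lt_of_le hy hs.1)))).continuousWithinAt)
      (fun s hs => by
        have h := Real.hasDerivAt_rpow_const (x := s) (p := α - 1)
          (Or.inl (ne_of_gt (hy.trans hs.1)))
        rw [show α - 2 = α - 1 - 1 by ring]
        exact h)
  have hξ0 : 0 < ξ := hy.trans hξ.1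
  have hxy' : 0 < x - y := sub_pos.mpr hlt
  have hEq' : x ^ (α - 1) - y ^ (α - 1) = (α - 1) * ξ ^ (α - 2) * (x - y) := by
    field_simp at hEq
    linarith [hEq]
  rw [hEq']
  have hle : x ^ (α - 2) ≤ ξ ^ (α - 2) :=
    Real.rpow_le_rpow_of_nonpos hξ0 hξ.2.le (by linarith)
  have := mul_le_mul_of_nonneg_right
    (mul_le_mul_of_nonneg_left hle (by linarith : (0:ℝ) ≤ α - 1)) hxy'.le
  linarith

lemma keyMono (α : ℝ) (hα₁ : 1 < α) (hα₂ : α < 2) {m a b X : ℝ} (hm : 0 < m)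
    (hma : m < a) (hab : a < b) (hbX : b ≤ X) :
    α * (α - 1) * m * X ^ (α - 2) * (b - a) ≤ (b ^ α - (b - m) ^ α) - (a ^ α - (a - m) ^ α) := by
  have ha0 : 0 < a := hm.trans hma
  have hX0 : 0 < X := lt_of_lt_of_le (ha0.trans hab) hbX
  obtain ⟨ξ, hξ, hEq⟩ := exists_hasDerivAt_eq_slope (fun t => t ^ α - (t - m) ^ α)
      (fun t => α * t ^ (α - 1) - α * (t - m) ^ (α - 1)) hab
      (fun t ht => by
        apply ContinuousWithinAt.sub
        · exact (Real.continuousAt_rpow_const t α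
            (Or.inl (ne_of_gt (lt_of_lt_of_le ha0 ht.1)))).continuousWithinAt
        · exact ((continuousAt_id.sub continuousAt_const).rpow_const
            (Or.inl (ne_of_gt (by have := ht.1; simp only [Pi.sub_apply, id]; linarith)))).continuousWithinAt)
      (fun t ht => by
        have h1 := Real.hasDerivAt_rpow_const (x := t) (p := α)
          (Or.inl (ne_of_gt (ha0.trans ht.1)))
        have h2 : HasDerivAt (fun t => (t - m) ^ α) (α * (t - m) ^ (α - 1)) t := by
          have h3 := Real.hasDerivAt_rpow_const (x := t - m) (p := α)
            (Or.inl (ne_of_gt (by have := ht.1; linarith)))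
          have h4 : HasDerivAt (fun t : ℝ => t - m) 1 t := (hasDerivAt_id t).sub_const m
          have := HasDerivAt.comp t h3 h4
          rw [mul_one] at this
          exact this
        exact h1.sub h2)
  have hξa : a < ξ := hξ.1
  have hξb : ξ < b := hξ.2
  have hξ0 : 0 < ξ := ha0.trans hξa
  have hξm : 0 < ξ - m := by linarith
  have hba : 0 < b - a := sub_pos.mpr hab
  have hEq' : (b ^ α - (b - m) ^ α) - (a ^ α - (a - m) ^ α)
      = (α * ξ ^ (α - 1) - α * (ξ - m) ^ (α - 1)) * (b - a) := by
    field_simp at hEq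
    linarith [hEq]
  rw [hEq']
  -- tangent bound
  have ht := tangentAux α hα₁ hα₂ (x := ξ) (y := ξ - m) hξm (by linarith)
  have hXξ : X ^ (α - 2) ≤ ξ ^ (α - 2) :=
    Real.rpow_le_rpow_of_nonpos hξ0 (by linarith) (by linarith)
  have hα0 : (0:ℝ) < α := by linarith
  have h5 : (α - 1) * X ^ (α - 2) * m ≤ ξ ^ (α - 1) - (ξ - m) ^ (α - 1) := by
    have := mul_le_mul_of_nonneg_right
      (mul_le_mul_of_nonneg_left hXξ (by linarith : (0:ℝ) ≤ α - 1)) hm.le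
    calc (α - 1) * X ^ (α - 2) * m ≤ (α - 1) * ξ ^ (α - 2) * m := this
      _ = (α - 1) * ξ ^ (α - 2) * (ξ - (ξ - m)) := by ring_nf
      _ ≤ _ := ht
  have h6 := mul_le_mul_of_nonneg_right (mul_le_mul_of_nonneg_left h5 hα0.le) hba.le
  calc α * (α - 1) * m * X ^ (α - 2) * (b - a)
      = α * ((α - 1) * X ^ (α - 2) * m) * (b - a) := by ring
    _ ≤ α * (ξ ^ (α - 1) - (ξ - m) ^ (α - 1)) * (b - a) := h6
    _ = (α * ξ ^ (α - 1) - α * (ξ - m) ^ (α - 1)) * (b - a) := by ring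

lemma spacingAux (α : ℝ) (hα₁ : 1 < α) (hα₂ : α < 2) {N m a b : ℝ} (hN : 1 ≤ N)
    (hm0 : m ≠ 0) (hm : |m| ≤ N / 4) (ha : N / 2 < a) (hab : a < b) (hb : b ≤ N) :
    α * (α - 1) / 2 * |m| * N ^ (α - 2) * (b - a)
      ≤ |(b ^ α - (b - m) ^ α) - (a ^ α - (a - m) ^ α)| := by
  have hN0 : (0:ℝ) < N := by linarith
  have hα0 : (0:ℝ) < α := by linarith
  have hα1' : (0:ℝ) < α - 1 := by linarith
  have hNn : 0 < N ^ (α - 2) := Real.rpow_pos_of_pos hN0 _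
  have hba : 0 < b - a := sub_pos.mpr hab
  rcases lt_or_gt_of_ne hm0 with hneg | hpos
  · -- m < 0
    have hm' : 0 < -m := by linarith
    have habs : |m| = -m := abs_of_neg hneg
    have habs' : -m ≤ N / 4 := by rw [habs] at hm; exact hm
    have key := keyMono α hα₁ hα₂ (m := -m) (a := a + -m) (b := b + -m) (X := 2 * N)
      hm' (by linarith) (by linarith) (by linarith)
    have hsimp : (b + -m - -m) = b := by ring
    have hsimp' : (a + -m - -m) = a := by ring
    rw [hsimp, hsimp'] at key
    -- key : α*(α-1)*(-m)*(2N)^(α-2)*(b-a+...) ≤ ((b-m)^α - b^α) - ((a-m)^α - a^α)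
    have h2N : (1:ℝ)/2 * N ^ (α - 2) ≤ (2 * N) ^ (α - 2) := by
      rw [Real.mul_rpow (by norm_num) hN0.le]
      have : (1:ℝ)/2 ≤ (2:ℝ) ^ (α - 2) := by
        rw [show (1:ℝ)/2 = (2:ℝ) ^ (-1:ℝ) by
          rw [Real.rpow_neg_one]; norm_num]
        exact Real.rpow_le_rpow_of_exponent_le one_le_two (by linarith)
      exact mul_le_mul_of_nonneg_right this hNn.le
    have hval : (b ^ α - (b - m) ^ α) - (a ^ α - (a - m) ^ α)
        = -(((b + -m) ^ α - b ^ α) - ((a + -m) ^ α - a ^ α)) := by ring_nf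
    have hle : α * (α - 1) / 2 * |m| * N ^ (α - 2) * (b - a)
        ≤ ((b + -m) ^ α - b ^ α) - ((a + -m) ^ α - a ^ α) := by
      have hstep : α * (α - 1) / 2 * |m| * N ^ (α - 2) * (b - a)
          ≤ α * (α - 1) * (-m) * ((2 * N) ^ (α - 2)) * (b + -m - (a + -m)) := by
        have h1 : α * (α - 1) / 2 * |m| * N ^ (α - 2)
            ≤ α * (α - 1) * (-m) * (2 * N) ^ (α - 2) := by
          rw [habs]
          calc α * (α - 1) / 2 * (-m) * N ^ (α - 2)
              = (α * (α - 1) * (-m)) * (1/2 * N ^ (α - 2)) := by ring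
            _ ≤ (α * (α - 1) * (-m)) * ((2 * N) ^ (α - 2)) :=
                mul_le_mul_of_nonneg_left h2N (by positivity)
        have := mul_le_mul_of_nonneg_right h1 hba.le
        calc α * (α - 1) / 2 * |m| * N ^ (α - 2) * (b - a)
            ≤ α * (α - 1) * (-m) * (2 * N) ^ (α - 2) * (b - a) := this
          _ = α * (α - 1) * (-m) * (2 * N) ^ (α - 2) * (b + -m - (a + -m)) := by ring
      exact hstep.trans key
    rw [hval]
    calc α * (α - 1) / 2 * |m| * N ^ (α - 2) * (b - a)
        ≤ ((b + -m) ^ α - b ^ α) - ((a + -m) ^ α - a ^ α) := hle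
      _ ≤ |(((b + -m) ^ α - b ^ α) - ((a + -m) ^ α - a ^ α))| := le_abs_self _
      _ = |-((((b + -m) ^ α - b ^ α) - ((a + -m) ^ α - a ^ α)))| := (abs_neg _).symm
  · -- m > 0
    have habs : |m| = m := abs_of_pos hpos
    have key := keyMono α hα₁ hα₂ (m := m) (a := a) (b := b) (X := N)
      hpos (by rw [habs] at hm; linarith) hab hb
    calc α * (α - 1) / 2 * |m| * N ^ (α - 2) * (b - a)
        ≤ α * (α - 1) * m * N ^ (α - 2) * (b - a) := by
          rw [habs]; nlinarith [mul_pos (mul_pos (mul_pos hα0 hα1') hpos) (mul_pos hNn hba)]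
      _ ≤ (b ^ α - (b - m) ^ α) - (a ^ α - (a - m) ^ α) := key
      _ ≤ _ := le_abs_self _

lemma countAux {S : Set ℤ} {L : ℝ} (hL : 0 ≤ L)
    (h : ∀ k ∈ S, ∀ k' ∈ S, |(k : ℝ) - (k' : ℝ)| ≤ L) :
    (S.ncard : ℝ) ≤ 2 * L + 1 := by
  rcases S.eq_empty_or_nonempty with rfl | ⟨k₀, hk₀⟩
  · simp; linarith
  have hsub : S ⊆ Set.Icc (k₀ - ⌊L⌋) (k₀ + ⌊L⌋) := by
    intro k hk
    have h1 := h k hk k₀ hk₀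
    have h2 : |k - k₀| ≤ ⌊L⌋ := by
      rw [Int.le_floor]
      push_cast
      exact_mod_cast h1
    rw [abs_le] at h2
    constructor <;> omega
  have hfl : (0:ℤ) ≤ ⌊L⌋ := Int.floor_nonneg.mpr hL
  have hfin : (Set.Icc (k₀ - ⌊L⌋) (k₀ + ⌊L⌋)).Finite := Set.finite_Icc _ _
  have hle := Set.ncard_le_ncard hsub hfin
  have hIcc : (Set.Icc (k₀ - ⌊L⌋) (k₀ + ⌊L⌋)).ncard = (2 * ⌊L⌋ + 1).toNat := by
    rw [← Finset.coe_Icc, Set.ncard_coe_finset, Int.card_Icc]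
    congr 1
    omega
  rw [hIcc] at hle
  have : ((2 * ⌊L⌋ + 1).toNat : ℝ) ≤ 2 * L + 1 := by
    have h4 : ((2 * ⌊L⌋ + 1).toNat : ℤ) = 2 * ⌊L⌋ + 1 := Int.toNat_of_nonneg (by omega)
    have h5 : ((2 * ⌊L⌋ + 1).toNat : ℝ) = 2 * (⌊L⌋ : ℝ) + 1 := by
      exact_mod_cast congrArg (fun z : ℤ => (z : ℝ)) h4
    rw [h5]
    have := Int.floor_le L
    linarith
  calc (S.ncard : ℝ) ≤ ((2 * ⌊L⌋ + 1).toNat : ℝ) := by exact_mod_cast hle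
    _ ≤ 2 * L + 1 := this

end CountingHelpers

/-- **Counting lemma (high-low-low regime).**
For `1 < α < 2` and `ε > 0` there are `c ∈ (0,1)` and `C > 0` such that for all `N ≥ 1`,
all `k₂ ≠ k₃` with `|k₂|, |k₃| ≤ cN`, and all `μ ∈ ℝ`:
`#{k₁ : N/2 < |k₁| ≤ N, |Φ_{k₁,k₂,k₃} − μ| ≤ N^ε} ≤ C N^ε (1 + N^{2−α}/(1+|k₂−k₃|))`. -/
theorem stmt3 (α ε : ℝ) (hα₁ : 1 < α) (hα₂ : α < 2) (hε : 0 < ε) :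
    ∃ c ∈ Set.Ioo (0 : ℝ) 1, ∃ C > 0, ∀ N : ℝ, 1 ≤ N → ∀ k₂ k₃ : ℤ, k₂ ≠ k₃ →
      |(k₂ : ℝ)| ≤ c * N → |(k₃ : ℝ)| ≤ c * N → ∀ μ : ℝ,
      (({k₁ : ℤ | N / 2 < |(k₁ : ℝ)| ∧ |(k₁ : ℝ)| ≤ N ∧
          |resPhi α k₁ k₂ k₃ - μ| ≤ N ^ ε}.ncard : ℝ)) ≤
        C * N ^ ε * (1 + N ^ (2 - α) / (1 + |((k₂ - k₃ : ℤ) : ℝ)|)) := by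
  have hA : 0 < α * (α - 1) := by nlinarith
  refine ⟨1/8, ⟨by norm_num, by norm_num⟩, 2 + 32 / (α * (α - 1)), by positivity, ?_⟩
  intro N hN k₂ k₃ hne h2 h3 μ
  set A := α * (α - 1) with hAdef
  have hN0 : (0:ℝ) < N := by linarith
  have hu1 : 1 ≤ N ^ ε := by
    have := Real.rpow_le_rpow_of_exponent_le hN (le_of_lt hε : (0:ℝ) ≤ ε)
    rwa [Real.rpow_zero] at this
  have hv0 : 0 < N ^ (2 - α) := Real.rpow_pos_of_pos hN0 _
  have hw0 : 0 < N ^ (α - 2) := Real.rpow_pos_of_pos hN0 _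
  have hvw : N ^ (α - 2) * N ^ (2 - α) = 1 := by
    rw [← Real.rpow_add hN0, show α - 2 + (2 - α) = 0 by ring, Real.rpow_zero]
  set mr : ℝ := ((k₂ - k₃ : ℤ) : ℝ) with hmrdef
  have hmr0 : mr ≠ 0 := by
    rw [hmrdef]
    exact_mod_cast sub_ne_zero.mpr hne
  have hmr1 : (1:ℝ) ≤ |mr| := by
    rw [hmrdef]
    exact_mod_cast Int.one_le_abs (sub_ne_zero.mpr hne)
  have hmrN : |mr| ≤ N / 4 := by
    have : |mr| ≤ |(k₂ : ℝ)| + |(k₃ : ℝ)| := by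
      rw [hmrdef]
      push_cast
      exact (abs_sub _ _)
    linarith
  set S : Set ℤ := {k₁ : ℤ | N / 2 < |(k₁ : ℝ)| ∧ |(k₁ : ℝ)| ≤ N ∧
      |resPhi α k₁ k₂ k₃ - μ| ≤ N ^ ε} with hSdef
  set L : ℝ := 4 * N ^ ε * N ^ (2 - α) / (A * |mr|) with hLdef
  have hL0 : 0 ≤ L := by rw [hLdef]; positivity
  set δ : ℝ := A / 2 * |mr| * N ^ (α - 2) with hδdef
  have hδ0 : 0 < δ := by rw [hδdef]; positivity
  have hδL : δ * L = 2 * N ^ ε := by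
    rw [hδdef, hLdef]
    field_simp
    linear_combination 4 * hvw
  -- rewriting resPhi on each branch
  set c₀ : ℝ := -|(k₂ : ℝ)| ^ α + |(k₃ : ℝ)| ^ α with hc₀def
  have hresP : ∀ k : ℤ, 0 < k → N / 2 < |(k : ℝ)| →
      resPhi α k k₂ k₃ = ((k : ℝ) ^ α - ((k : ℝ) - mr) ^ α) + c₀ := by
    intro k hk hk2
    have h1 : |(k : ℝ)| = (k : ℝ) := abs_of_pos (by exact_mod_cast hk)
    have h2' : ((k - k₂ + k₃ : ℤ) : ℝ) = (k : ℝ) - mr := by rw [hmrdef]; push_cast; ring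
    have h3' : 0 < (k : ℝ) - mr := by
      have := le_abs_self mr
      rw [h1] at hk2
      linarith
    rw [resPhi, h1, h2', abs_of_pos h3', hc₀def]
    ring
  have hresN : ∀ k : ℤ, k < 0 → N / 2 < |(k : ℝ)| →
      resPhi α k k₂ k₃ = ((-(k : ℝ)) ^ α - ((-(k : ℝ)) - (-mr)) ^ α) + c₀ := by
    intro k hk hk2
    have hk' : (k : ℝ) < 0 := by exact_mod_cast hk
    have h1 : |(k : ℝ)| = -(k : ℝ) := abs_of_neg hk'
    have h2' : ((k - k₂ + k₃ : ℤ) : ℝ) = (k : ℝ) - mr := by rw [hmrdef]; push_cast; ring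
    have h3' : (k : ℝ) - mr < 0 := by
      have := neg_abs_le mr
      rw [h1] at hk2
      linarith
    rw [resPhi, h1, h2', abs_of_neg h3', hc₀def]
    ring
  -- branches
  set Sp : Set ℤ := S ∩ {k | 0 < k} with hSpdef
  set Sn : Set ℤ := S ∩ {k | k < 0} with hSndef
  have hsplit : S ⊆ Sp ∪ Sn := by
    intro k hk
    rcases lt_trichotomy k 0 with h | rfl | h
    · exact Or.inr ⟨hk, h⟩
    · exfalso
      have := hk.1
      simp at this
      linarith
    · exact Or.inl ⟨hk, h⟩
  -- pairwise bounds
  have hpairP : ∀ k ∈ Sp, ∀ k' ∈ Sp, |(k : ℝ) - (k' : ℝ)| ≤ L := by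
    have hmain : ∀ k ∈ Sp, ∀ k' ∈ Sp, k < k' → (k' : ℝ) - (k : ℝ) ≤ L := by
      rintro k ⟨hk, hkpos⟩ k' ⟨hk', hkpos'⟩ hlt
      have hkr : (0:ℝ) < (k : ℝ) := by exact_mod_cast hkpos
      have hkr' : (0:ℝ) < (k' : ℝ) := by exact_mod_cast hkpos'
      have habk : |(k : ℝ)| = (k : ℝ) := abs_of_pos hkr
      have habk' : |(k' : ℝ)| = (k' : ℝ) := abs_of_pos hkr'
      have e1 := hresP k hkpos hk.1
      have e2 := hresP k' hkpos' hk'.1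
      have hdiff : |((k' : ℝ) ^ α - ((k' : ℝ) - mr) ^ α) - ((k : ℝ) ^ α - ((k : ℝ) - mr) ^ α)|
          ≤ 2 * N ^ ε := by
        have b1 := hk.2.2
        have b2 := hk'.2.2
        rw [e1] at b1
        rw [e2] at b2
        have := abs_sub (resPhi α k' k₂ k₃ - μ) (resPhi α k k₂ k₃ - μ)
        calc |((k' : ℝ) ^ α - ((k' : ℝ) - mr) ^ α) - ((k : ℝ) ^ α - ((k : ℝ) - mr) ^ α)|
            = |((((k' : ℝ) ^ α - ((k' : ℝ) - mr) ^ α) + c₀ - μ)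
              - (((k : ℝ) ^ α - ((k : ℝ) - mr) ^ α) + c₀ - μ))| := by ring_nf
          _ ≤ |(((k' : ℝ) ^ α - ((k' : ℝ) - mr) ^ α) + c₀ - μ)|
              + |(((k : ℝ) ^ α - ((k : ℝ) - mr) ^ α) + c₀ - μ)| := abs_sub _ _
          _ ≤ N ^ ε + N ^ ε := add_le_add b2 b1
          _ = 2 * N ^ ε := by ring
      have hsp := spacingAux α hα₁ hα₂ hN hmr0 hmrN
        (show N / 2 < (k : ℝ) by rw [← habk]; exact hk.1)
        (show (k : ℝ) < (k' : ℝ) by exact_mod_cast hlt)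
        (show (k' : ℝ) ≤ N by rw [← habk']; exact hk'.2.1)
      have hfin : δ * ((k' : ℝ) - (k : ℝ)) ≤ δ * L := by
        rw [hδL]
        calc δ * ((k' : ℝ) - (k : ℝ))
            = A / 2 * |mr| * N ^ (α - 2) * ((k' : ℝ) - (k : ℝ)) := by rw [hδdef]
          _ ≤ _ := hsp.trans hdiff
      exact le_of_mul_le_mul_left hfin hδ0
    intro k hk k' hk'
    rcases lt_trichotomy k k' with h | rfl | h
    · rw [abs_sub_comm, abs_of_nonneg (by exact_mod_cast sub_nonneg.mpr h.le)]
      exact hmain k hk k' hk' h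
    · simpa using hL0
    · rw [abs_of_nonneg (by exact_mod_cast sub_nonneg.mpr h.le)]
      exact hmain k' hk' k hk h
  have hpairN : ∀ k ∈ Sn, ∀ k' ∈ Sn, |(k : ℝ) - (k' : ℝ)| ≤ L := by
    have hmain : ∀ k ∈ Sn, ∀ k' ∈ Sn, k < k' → (k' : ℝ) - (k : ℝ) ≤ L := by
      rintro k ⟨hk, hkneg⟩ k' ⟨hk', hkneg'⟩ hlt
      have hkr : (k : ℝ) < 0 := by exact_mod_cast hkneg
      have hkr' : (k' : ℝ) < 0 := by exact_mod_cast hkneg'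
      have habk : |(k : ℝ)| = -(k : ℝ) := abs_of_neg hkr
      have habk' : |(k' : ℝ)| = -(k' : ℝ) := abs_of_neg hkr'
      have e1 := hresN k hkneg hk.1
      have e2 := hresN k' hkneg' hk'.1
      have hdiff : |((-(k : ℝ)) ^ α - ((-(k : ℝ)) - (-mr)) ^ α)
          - ((-(k' : ℝ)) ^ α - ((-(k' : ℝ)) - (-mr)) ^ α)| ≤ 2 * N ^ ε := by
        have b1 := hk.2.2
        have b2 := hk'.2.2
        rw [e1] at b1
        rw [e2] at b2
        calc |((-(k : ℝ)) ^ α - ((-(k : ℝ)) - (-mr)) ^ α)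
              - ((-(k' : ℝ)) ^ α - ((-(k' : ℝ)) - (-mr)) ^ α)|
            = |((((-(k : ℝ)) ^ α - ((-(k : ℝ)) - (-mr)) ^ α) + c₀ - μ)
              - (((-(k' : ℝ)) ^ α - ((-(k' : ℝ)) - (-mr)) ^ α) + c₀ - μ))| := by ring_nf
          _ ≤ _ := abs_sub _ _
          _ ≤ N ^ ε + N ^ ε := add_le_add b1 b2
          _ = 2 * N ^ ε := by ring
      have hm0' : -mr ≠ 0 := neg_ne_zero.mpr hmr0
      have hmN' : |(-mr)| ≤ N / 4 := by rwa [abs_neg]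
      have hsp := spacingAux α hα₁ hα₂ hN hm0' hmN'
        (show N / 2 < -(k' : ℝ) by rw [← habk']; exact hk'.1)
        (show -(k' : ℝ) < -(k : ℝ) by
          have : (k : ℝ) < (k' : ℝ) := by exact_mod_cast hlt
          linarith)
        (show -(k : ℝ) ≤ N by rw [← habk]; exact hk.2.1)
      have hfin : δ * ((k' : ℝ) - (k : ℝ)) ≤ δ * L := by
        rw [hδL]
        calc δ * ((k' : ℝ) - (k : ℝ))
            = A / 2 * |(-mr)| * N ^ (α - 2) * ((-(k : ℝ)) - (-(k' : ℝ))) := by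
              rw [hδdef, abs_neg]; ring
          _ ≤ _ := hsp.trans hdiff
      exact le_of_mul_le_mul_left hfin hδ0
    intro k hk k' hk'
    rcases lt_trichotomy k k' with h | rfl | h
    · rw [abs_sub_comm, abs_of_nonneg (by exact_mod_cast sub_nonneg.mpr h.le)]
      exact hmain k hk k' hk' h
    · simpa using hL0
    · rw [abs_of_nonneg (by exact_mod_cast sub_nonneg.mpr h.le)]
      exact hmain k' hk' k hk h
  -- cardinality bounds
  have hcardP := countAux hL0 hpairP
  have hcardN := countAux hL0 hpairN
  -- finiteness of branches
  have hSfin : S.Finite := by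
    apply Set.Finite.subset (Set.finite_Icc (-(⌈N⌉ : ℤ)) ⌈N⌉)
    intro k hk
    have h1 : |(k : ℝ)| ≤ N := hk.2.1
    have h2' : (k : ℝ) ≤ (⌈N⌉ : ℤ) := le_trans (le_trans (le_abs_self _) h1) (Int.le_ceil N)
    have h3' : -((⌈N⌉ : ℤ) : ℝ) ≤ (k : ℝ) := by
      have := neg_abs_le (k : ℝ)
      have h4 : N ≤ ((⌈N⌉ : ℤ) : ℝ) := Int.le_ceil N
      linarith
    constructor
    · exact_mod_cast h3'
    · exact_mod_cast h2'
  have hcard : (S.ncard : ℝ) ≤ (Sp.ncard : ℝ) + (Sn.ncard : ℝ) := by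
    have h1 : S.ncard ≤ (Sp ∪ Sn).ncard :=
      Set.ncard_le_ncard hsplit ((hSfin.inter_of_left _).union (hSfin.inter_of_left _))
    have h2' : (Sp ∪ Sn).ncard ≤ Sp.ncard + Sn.ncard := Set.ncard_union_le _ _
    exact_mod_cast h1.trans h2'
  -- final arithmetic
  have htot : (S.ncard : ℝ) ≤ 4 * L + 2 := by linarith
  have hC2 : (2:ℝ) ≤ (2 + 32 / A) * N ^ ε := by
    have h32 : (0:ℝ) < 32 / A := by positivity
    nlinarith
  have hkey : 16 * (1 + |mr|) ≤ (2 * A + 32) * |mr| := by nlinarith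
  have hpart2 : 4 * L ≤ (2 + 32 / A) * N ^ ε * (N ^ (2 - α) / (1 + |mr|)) := by
    have h16 : 4 * L = 16 * (N ^ ε * N ^ (2 - α)) / (A * |mr|) := by rw [hLdef]; ring
    have hrhs : (2 + 32 / A) * N ^ ε * (N ^ (2 - α) / (1 + |mr|))
        = ((2 + 32 / A) * N ^ ε * N ^ (2 - α)) / (1 + |mr|) := by ring
    rw [h16, hrhs, div_le_div_iff₀ (by positivity) (by positivity)]
    calc 16 * (N ^ ε * N ^ (2 - α)) * (1 + |mr|)
        = (16 * (1 + |mr|)) * (N ^ ε * N ^ (2 - α)) := by ring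
      _ ≤ ((2 * A + 32) * |mr|) * (N ^ ε * N ^ (2 - α)) :=
          mul_le_mul_of_nonneg_right hkey (by positivity)
      _ = (2 + 32 / A) * N ^ ε * N ^ (2 - α) * (A * |mr|) := by field_simp
  have hrhs2 : (2 + 32 / A) * N ^ ε * (1 + N ^ (2 - α) / (1 + |mr|))
      = (2 + 32 / A) * N ^ ε + (2 + 32 / A) * N ^ ε * (N ^ (2 - α) / (1 + |mr|)) := by ring
  calc (S.ncard : ℝ) ≤ 4 * L + 2 := htot
    _ ≤ (2 + 32 / A) * N ^ ε * (1 + N ^ (2 - α) / (1 + |mr|)) := by rw [hrhs2]; linarith
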